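/- Let n be a positive integer and w : {-1,1}^n → [0,∞) a weight function with nonempty support. Then log₂ Z(w) ≤ R(w) + n·log₂(3/2). -/

import Mathlib

open Finset

/-- Map a boolean to the corresponding element of `{-1, 1} ⊆ ℝ`. -/
noncomputable def sgn (b : Bool) : ℝ := if b then 1 else -1

/-- Standard inner product on `ℝ^ι` restricted to the cube `{-1,1}^ι`. -/
noncomputable def ip {ι : Type*} [Fintype ι] [DecidableEq ι] (c x : ι → Bool) : ℝ :=
  ∑ i, sgn (c i) * sgn (x i)

/-- `δ(c, w)`: the maximum over the support of `w` of `⟨c,x⟩ + log₂ w(x)`. -/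
noncomputable def wdelta {ι : Type*} [Fintype ι] [DecidableEq ι] (c : ι → Bool) (w : (ι → Bool) → ℝ) : ℝ :=
  sSup {y : ℝ | ∃ x, 0 < w x ∧ y = ip c x + Real.logb 2 (w x)}

/-- The weighted Rademacher complexity `R(w) = E_c[δ(c,w)]`, `c` uniform on the cube. -/
noncomputable def wRad {ι : Type*} [Fintype ι] [DecidableEq ι] (w : (ι → Bool) → ℝ) : ℝ :=
  (∑ c : ι → Bool, wdelta c w) / 2 ^ (Fintype.card ι)

/-- `Z(w)`: the total weight. -/
noncomputable def Zw {ι : Type*} [Fintype ι] [DecidableEq ι] (w : (ι → Bool) → ℝ) : ℝ := ∑ x, w x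

/-- `w_min`: the smallest positive weight. -/
noncomputable def wmin {ι : Type*} [Fintype ι] [DecidableEq ι] (w : (ι → Bool) → ℝ) : ℝ :=
  sInf {y : ℝ | ∃ x, 0 < w x ∧ y = w x}

/-- `w_max`: the largest weight. -/
noncomputable def wmax {ι : Type*} [Fintype ι] [DecidableEq ι] (w : (ι → Bool) → ℝ) : ℝ :=
  sSup {y : ℝ | ∃ x, y = w x}


noncomputable def lse (a b : ℝ) : ℝ := Real.logb 2 ((2:ℝ) ^ a + (2:ℝ) ^ b)

lemma rpow2_pos (a : ℝ) : (0:ℝ) < (2:ℝ) ^ a := Real.rpow_pos_of_pos two_pos a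

lemma lse_ge (l a b : ℝ) (h0 : 0 < l) (h1 : l < 1) :
    l * a + (1 - l) * b - l * Real.logb 2 l - (1 - l) * Real.logb 2 (1 - l) ≤ lse a b := by
  have hu : (0:ℝ) < (2:ℝ)^a := rpow2_pos a
  have hv : (0:ℝ) < (2:ℝ)^b := rpow2_pos b
  have h1l : (0:ℝ) < 1 - l := by linarith
  have key : ((2:ℝ)^a / l) ^ l * ((2:ℝ)^b / (1-l)) ^ (1-l) ≤ (2:ℝ)^a + (2:ℝ)^b := by
    have h := Real.geom_mean_le_arith_mean2_weighted h0.le h1l.le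
      (div_pos hu h0).le (div_pos hv h1l).le (by ring)
    calc ((2:ℝ)^a / l) ^ l * ((2:ℝ)^b / (1-l)) ^ (1-l)
        ≤ l * ((2:ℝ)^a / l) + (1-l) * ((2:ℝ)^b/(1-l)) := h
      _ = (2:ℝ)^a + (2:ℝ)^b := by field_simp
  have hlhs : (0:ℝ) < ((2:ℝ)^a / l) ^ l * ((2:ℝ)^b / (1-l)) ^ (1-l) := by positivity
  have hlog := Real.logb_le_logb_of_le (b := 2) (by norm_num) hlhs key
  refine le_trans (le_of_eq ?_) hlog
  rw [Real.logb_mul (by positivity) (by positivity),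
    Real.logb_rpow_eq_mul_logb_of_pos (div_pos hu h0),
    Real.logb_rpow_eq_mul_logb_of_pos (div_pos hv h1l),
    Real.logb_div hu.ne' h0.ne', Real.logb_div hv.ne' h1l.ne',
    Real.logb_rpow (by norm_num) (by norm_num), Real.logb_rpow (by norm_num) (by norm_num)]
  ring

lemma lse_le_max (a b : ℝ) :
    lse a b ≤ Real.logb 2 (3/2) + (max (a+1) (b-1) + max (a-1) (b+1)) / 2 := by
  have main : (2:ℝ)^a + (2:ℝ)^b ≤ (3/2) * (2:ℝ) ^ ((max (a+1) (b-1) + max (a-1) (b+1)) / 2) := by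
    rcases le_or_gt b (a-2) with h | h
    · rw [max_eq_left (by linarith), max_eq_left (by linarith),
        show (a + 1 + (a - 1))/2 = a by ring]
      have : (2:ℝ)^b ≤ (2:ℝ)^(a-1) := by
        exact (Real.rpow_le_rpow_left_iff one_lt_two).2 (by linarith)
      have e : (2:ℝ)^(a-1) = (2:ℝ)^a / 2 := by
        rw [Real.rpow_sub two_pos, Real.rpow_one]
      linarith
    · rcases le_or_gt a (b-2) with h2 | h2
      · rw [max_eq_right (by linarith), max_eq_right (by linarith),
          show (b - 1 + (b + 1))/2 = b by ring]
        have : (2:ℝ)^a ≤ (2:ℝ)^(b-1) := by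
          exact (Real.rpow_le_rpow_left_iff one_lt_two).2 (by linarith)
        have e : (2:ℝ)^(b-1) = (2:ℝ)^b / 2 := by
          rw [Real.rpow_sub two_pos, Real.rpow_one]
        linarith
      · rw [max_eq_left (by linarith), max_eq_right (by linarith),
          show (a + 1 + (b + 1))/2 = (a+b)/2 + 1 by ring]
        set t : ℝ := (2:ℝ) ^ ((a-b)/2) with ht
        have htpos : 0 < t := rpow2_pos _
        have ht2 : t ≤ 2 := by
          rw [ht]
          calc (2:ℝ) ^ ((a-b)/2) ≤ (2:ℝ)^(1:ℝ) :=
            (Real.rpow_le_rpow_left_iff one_lt_two).2 (by linarith)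
          _ = 2 := Real.rpow_one 2
        have ht12 : 1/2 ≤ t := by
          rw [ht]
          calc (1:ℝ)/2 = (2:ℝ)^(-1:ℝ) := by
                rw [Real.rpow_neg_one]; norm_num
          _ ≤ (2:ℝ) ^ ((a-b)/2) := (Real.rpow_le_rpow_left_iff one_lt_two).2 (by linarith)
        have ea : (2:ℝ)^a = (2:ℝ)^((a+b)/2) * t := by
          rw [ht, ← Real.rpow_add two_pos]; ring_nf
        have eb : (2:ℝ)^b = (2:ℝ)^((a+b)/2) * t⁻¹ := by
          rw [ht, ← Real.rpow_neg (by norm_num : (0:ℝ) ≤ 2), ← Real.rpow_add two_pos]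
          ring_nf
        have eM : (2:ℝ)^((a+b)/2 + 1) = (2:ℝ)^((a+b)/2) * 2 := by
          rw [Real.rpow_add two_pos, Real.rpow_one]
        rw [ea, eb, eM]
        have hmid : (0:ℝ) < (2:ℝ)^((a+b)/2) := rpow2_pos _
        have key : t + t⁻¹ ≤ 3 := by
          have hti : t * t⁻¹ = 1 := mul_inv_cancel₀ htpos.ne'
          have h' : t * (t + t⁻¹) ≤ t * 3 := by
            nlinarith [mul_nonneg (by linarith : (0:ℝ) ≤ 2*t - 1) (by linarith : (0:ℝ) ≤ 2 - t)]
          exact le_of_mul_le_mul_left h' htpos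
        nlinarith
  have hpos : (0:ℝ) < (2:ℝ)^a + (2:ℝ)^b := by positivity
  have := Real.logb_le_logb_of_le (b := 2) (by norm_num) hpos main
  refine le_trans this (le_of_eq ?_)
  rw [Real.logb_mul (by norm_num) (by positivity), Real.logb_rpow (by norm_num) (by norm_num)]

lemma sum_lse_ge {F : Type*} [Fintype F] [Nonempty F] (a b : F → ℝ) (N : ℝ) (hN : 0 < N)
    (hcard : (Fintype.card F : ℝ) = N) :
    N * lse ((∑ c, a c)/N) ((∑ c, b c)/N) ≤ ∑ c, lse (a c) (b c) := by
  set A : ℝ := (∑ c, a c)/N with hA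
  set B : ℝ := (∑ c, b c)/N with hB
  have huA : (0:ℝ) < (2:ℝ)^A := rpow2_pos _
  have huB : (0:ℝ) < (2:ℝ)^B := rpow2_pos _
  have hS : (0:ℝ) < (2:ℝ)^A + (2:ℝ)^B := by linarith
  set l : ℝ := (2:ℝ)^A / ((2:ℝ)^A + (2:ℝ)^B) with hl
  have h0 : 0 < l := div_pos huA hS
  have h1 : l < 1 := (div_lt_one hS).2 (by linarith)
  have h1l : 1 - l = (2:ℝ)^B / ((2:ℝ)^A + (2:ℝ)^B) := by
    rw [hl]; field_simp; ring
  have hlogl : Real.logb 2 l = A - lse A B := by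
    rw [hl, Real.logb_div huA.ne' hS.ne', Real.logb_rpow (by norm_num) (by norm_num), lse]
  have hlog1l : Real.logb 2 (1 - l) = B - lse A B := by
    rw [h1l, Real.logb_div huB.ne' hS.ne', Real.logb_rpow (by norm_num) (by norm_num), lse]
  have step : ∀ c : F, l * a c + (1 - l) * b c - l * Real.logb 2 l - (1 - l) * Real.logb 2 (1 - l)
      ≤ lse (a c) (b c) := fun c => lse_ge l (a c) (b c) h0 h1
  have hsum := Finset.sum_le_sum (fun c (_ : c ∈ Finset.univ) => step c)
  have hexp : ∑ c : F, (l * a c + (1 - l) * b c - l * Real.logb 2 l - (1 - l) * Real.logb 2 (1 - l))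
      = l * (N * A) + (1 - l) * (N * B) - N * (l * Real.logb 2 l) - N * ((1 - l) * Real.logb 2 (1 - l)) := by
    rw [Finset.sum_sub_distrib, Finset.sum_sub_distrib, Finset.sum_add_distrib,
      ← Finset.mul_sum, ← Finset.mul_sum, Finset.sum_const, Finset.sum_const,
      Finset.card_univ, nsmul_eq_mul, nsmul_eq_mul, hcard]
    have : (∑ c, a c) = N * A := by rw [hA]; field_simp
    have hb' : (∑ c, b c) = N * B := by rw [hB]; field_simp
    rw [this, hb']
  have final : N * lse A B = l * (N * A) + (1 - l) * (N * B) - N * (l * Real.logb 2 l) - N * ((1 - l) * Real.logb 2 (1 - l)) := by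
    rw [hlogl, hlog1l]; ring
  rw [final, ← hexp]
  exact hsum

lemma wdelta_ge {ι : Type*} [Fintype ι] [DecidableEq ι] (c : ι → Bool) (w : (ι → Bool) → ℝ)
    (x : ι → Bool) (hx : 0 < w x) : ip c x + Real.logb 2 (w x) ≤ wdelta c w := by
  apply le_csSup
  · apply Set.Finite.bddAbove
    apply Set.Finite.subset (Set.finite_range (fun x => ip c x + Real.logb 2 (w x)))
    rintro y ⟨x, hx', rfl⟩; exact ⟨x, rfl⟩
  · exact ⟨x, hx, rfl⟩

lemma wdelta_attained {ι : Type*} [Fintype ι] [DecidableEq ι] (c : ι → Bool) (w : (ι → Bool) → ℝ)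
    (hsupp : ∃ x, 0 < w x) :
    ∃ x, 0 < w x ∧ wdelta c w = ip c x + Real.logb 2 (w x) := by
  obtain ⟨x₀, hx₀⟩ := hsupp
  have hne : {y : ℝ | ∃ x, 0 < w x ∧ y = ip c x + Real.logb 2 (w x)}.Nonempty :=
    ⟨_, x₀, hx₀, rfl⟩
  have hfin : {y : ℝ | ∃ x, 0 < w x ∧ y = ip c x + Real.logb 2 (w x)}.Finite := by
    apply Set.Finite.subset (Set.finite_range (fun x => ip c x + Real.logb 2 (w x)))
    rintro y ⟨x, hx', rfl⟩; exact ⟨x, rfl⟩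
  exact hne.csSup_mem hfin

lemma ip_cons {n : ℕ} (b s : Bool) (c x : Fin n → Bool) :
    ip (Fin.cons b c) (Fin.cons s x) = sgn b * sgn s + ip c x := by
  unfold ip
  rw [Fin.sum_univ_succ]
  simp

lemma sum_cube_succ {n : ℕ} (f : (Fin (n+1) → Bool) → ℝ) :
    ∑ x, f x = ∑ x' : Fin n → Bool, (f (Fin.cons true x') + f (Fin.cons false x')) := by
  rw [← Equiv.sum_comp (Fin.consEquiv fun _ => Bool) f, Fintype.sum_prod_type,
    Fintype.sum_bool, ← Finset.sum_add_distrib]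
  simp [Fin.consEquiv]

lemma main_ind (n : ℕ) : ∀ w : (Fin n → Bool) → ℝ, (∀ x, 0 ≤ w x) → (∃ x, 0 < w x) →
    Real.logb 2 (Zw w) ≤ wRad w + n * Real.logb 2 (3/2) := by
  induction n with
  | zero =>
    intro w hw hsupp
    obtain ⟨x₀, hx₀⟩ := hsupp
    have hxall : ∀ x : Fin 0 → Bool, x = x₀ := fun x => Subsingleton.elim x x₀
    have hip : ∀ c x : Fin 0 → Bool, ip c x = 0 := by intro c x; simp [ip]
    have hdelta : ∀ c : Fin 0 → Bool, wdelta c w = Real.logb 2 (w x₀) := by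
      intro c
      have hset : {y : ℝ | ∃ x, 0 < w x ∧ y = ip c x + Real.logb 2 (w x)}
          = {Real.logb 2 (w x₀)} := by
        ext y
        simp only [Set.mem_setOf_eq, Set.mem_singleton_iff]
        constructor
        · rintro ⟨x, hx', rfl⟩; rw [hxall x, hip]; ring
        · rintro rfl; exact ⟨x₀, hx₀, by rw [hip]; ring⟩
      rw [wdelta, hset, csSup_singleton]
    have hZ : Zw w = w x₀ := by
      rw [Zw, Fintype.sum_eq_single x₀ (fun x hx => absurd (hxall x) hx)]
    have hR : wRad w = Real.logb 2 (w x₀) := by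
      rw [wRad, Fintype.sum_eq_single x₀ (fun c hc => absurd (hxall c) hc), hdelta]
      simp
    rw [hZ, hR]
    simp
  | succ n ih =>
    intro w hw hsupp
    have hγ0 : 0 ≤ Real.logb 2 (3/2) := Real.logb_nonneg (by norm_num) (by norm_num)
    set wt : (Fin n → Bool) → ℝ := fun x => w (Fin.cons true x) with hwt
    set wf : (Fin n → Bool) → ℝ := fun x => w (Fin.cons false x) with hwf
    have hZsum : Zw w = Zw wt + Zw wf := by
      rw [Zw, sum_cube_succ w, Finset.sum_add_distrib]; rfl
    have hlift : ∀ (bb ss : Bool) (c' : Fin n → Bool) (ws : (Fin n → Bool) → ℝ),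
        (∀ x, ws x = w (Fin.cons ss x)) → (∃ x, 0 < ws x) →
        sgn bb * sgn ss + wdelta c' ws ≤ wdelta (Fin.cons bb c') w := by
      intro bb ss c' ws hws hsp
      obtain ⟨x, hx, hEq⟩ := wdelta_attained c' ws hsp
      rw [hEq]
      have h1 : 0 < w (Fin.cons ss x) := by rw [← hws]; exact hx
      calc sgn bb * sgn ss + (ip c' x + Real.logb 2 (ws x))
          = ip (Fin.cons bb c') (Fin.cons ss x) + Real.logb 2 (w (Fin.cons ss x)) := by
            rw [ip_cons, hws]; ring
        _ ≤ wdelta (Fin.cons bb c') w := wdelta_ge _ _ _ h1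
    have hdeg : ∀ (ss : Bool) (ws : (Fin n → Bool) → ℝ), (∀ x, ws x = w (Fin.cons ss x)) →
        (∃ x, 0 < ws x) → wRad ws ≤ wRad w := by
      intro ss ws hws hsp
      have hterm : ∀ c' : Fin n → Bool, 2 * wdelta c' ws ≤
          wdelta (Fin.cons true c') w + wdelta (Fin.cons false c') w := by
        intro c'
        have h1 := hlift true ss c' ws hws hsp
        have h2 := hlift false ss c' ws hws hsp
        cases ss <;> simp [sgn] at h1 h2 <;> linarith
      have hsum : 2 * ∑ c' : Fin n → Bool, wdelta c' ws ≤ ∑ c : Fin (n+1) → Bool, wdelta c w := by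
        rw [sum_cube_succ (fun c => wdelta c w), Finset.mul_sum]
        exact Finset.sum_le_sum fun c' _ => hterm c'
      simp only [wRad, Fintype.card_fin]
      rw [div_le_div_iff₀ (by positivity) (by positivity), pow_succ]
      have hp : (0:ℝ) < 2^n := by positivity
      nlinarith [hsum, hp]
    by_cases ht : ∃ x, 0 < wt x
    · by_cases hf : ∃ x, 0 < wf x
      · -- main case
        set N : ℝ := 2^n with hN
        have hNpos : (0:ℝ) < N := by positivity
        have hZt : 0 < Zw wt := Finset.sum_pos' (fun x _ => hw _)
          (ht.elim fun x hx => ⟨x, Finset.mem_univ x, hx⟩)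
        have hZf : 0 < Zw wf := Finset.sum_pos' (fun x _ => hw _)
          (hf.elim fun x hx => ⟨x, Finset.mem_univ x, hx⟩)
        have iht := ih wt (fun x => hw _) ht
        have ihf := ih wf (fun x => hw _) hf
        have hterm : ∀ c' : Fin n → Bool, 2 * (lse (wdelta c' wt) (wdelta c' wf) - Real.logb 2 (3/2)) ≤
            wdelta (Fin.cons true c') w + wdelta (Fin.cons false c') w := by
          intro c'
          have h1 := hlift true true c' wt (fun _ => rfl) ht
          have h2 := hlift true false c' wf (fun _ => rfl) hf
          have h3 := hlift false true c' wt (fun _ => rfl) ht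
          have h4 := hlift false false c' wf (fun _ => rfl) hf
          simp [sgn] at h1 h2 h3 h4
          have hm1 : max (wdelta c' wt + 1) (wdelta c' wf - 1) ≤ wdelta (Fin.cons true c') w :=
            max_le (by linarith) (by linarith)
          have hm2 : max (wdelta c' wt - 1) (wdelta c' wf + 1) ≤ wdelta (Fin.cons false c') w :=
            max_le (by linarith) (by linarith)
          have hmax := lse_le_max (wdelta c' wt) (wdelta c' wf)
          linarith
        have hsum1 : ∑ c' : Fin n → Bool, 2 * (lse (wdelta c' wt) (wdelta c' wf) - Real.logb 2 (3/2))
            ≤ ∑ c : Fin (n+1) → Bool, wdelta c w := by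
          rw [sum_cube_succ (fun c => wdelta c w)]
          exact Finset.sum_le_sum fun c' _ => hterm c'
        have hcardF : ((Fintype.card (Fin n → Bool) : ℕ) : ℝ) = N := by
          simp [hN]
        have hjensen := sum_lse_ge (fun c' => wdelta c' wt) (fun c' => wdelta c' wf) N hNpos hcardF
        have hexpand : ∑ c' : Fin n → Bool, 2 * (lse (wdelta c' wt) (wdelta c' wf) - Real.logb 2 (3/2))
            = 2 * (∑ c' : Fin n → Bool, lse (wdelta c' wt) (wdelta c' wf)) - 2 * N * Real.logb 2 (3/2) := by
          rw [Finset.sum_congr rfl (fun c' (_ : c' ∈ Finset.univ) =>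
            (by ring : 2 * (lse (wdelta c' wt) (wdelta c' wf) - Real.logb 2 (3/2))
              = 2 * lse (wdelta c' wt) (wdelta c' wf) - 2 * Real.logb 2 (3/2))),
            Finset.sum_sub_distrib, ← Finset.mul_sum, Finset.sum_const, Finset.card_univ,
            nsmul_eq_mul, hcardF]
          ring
        have hRw : lse (wRad wt) (wRad wf) - Real.logb 2 (3/2) ≤ wRad w := by
          have hAeq : wRad wt = (∑ c' : Fin n → Bool, wdelta c' wt)/N := by
            simp only [wRad, Fintype.card_fin, hN]
          have hBeq : wRad wf = (∑ c' : Fin n → Bool, wdelta c' wf)/N := by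
            simp only [wRad, Fintype.card_fin, hN]
          rw [hAeq, hBeq]
          simp only [wRad, Fintype.card_fin]
          rw [le_div_iff₀ (by positivity : (0:ℝ) < (2:ℝ)^(n+1)), pow_succ, ← hN]
          have e1 : (lse ((∑ c' : Fin n → Bool, wdelta c' wt)/N) ((∑ c' : Fin n → Bool, wdelta c' wf)/N)
              - Real.logb 2 (3/2)) * (N * 2)
              = 2 * (N * lse ((∑ c' : Fin n → Bool, wdelta c' wt)/N) ((∑ c' : Fin n → Bool, wdelta c' wf)/N))
                - 2 * N * Real.logb 2 (3/2) := by ring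
          rw [e1]
          linarith [hjensen, hexpand ▸ hsum1]
        have hmono : Real.logb 2 (Zw w) - n * Real.logb 2 (3/2) ≤ lse (wRad wt) (wRad wf) := by
          have h2A : (2:ℝ)^(Real.logb 2 (Zw wt) - n * Real.logb 2 (3/2)) ≤ (2:ℝ)^(wRad wt) :=
            (Real.rpow_le_rpow_left_iff one_lt_two).2 (by linarith)
          have h2B : (2:ℝ)^(Real.logb 2 (Zw wf) - n * Real.logb 2 (3/2)) ≤ (2:ℝ)^(wRad wf) :=
            (Real.rpow_le_rpow_left_iff one_lt_two).2 (by linarith)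
          have eA : (2:ℝ)^(Real.logb 2 (Zw wt) - n * Real.logb 2 (3/2))
              = Zw wt * ((2:ℝ)^((n:ℝ) * Real.logb 2 (3/2)))⁻¹ := by
            rw [Real.rpow_sub two_pos, Real.rpow_logb two_pos (by norm_num) hZt, div_eq_mul_inv]
          have eB : (2:ℝ)^(Real.logb 2 (Zw wf) - n * Real.logb 2 (3/2))
              = Zw wf * ((2:ℝ)^((n:ℝ) * Real.logb 2 (3/2)))⁻¹ := by
            rw [Real.rpow_sub two_pos, Real.rpow_logb two_pos (by norm_num) hZf, div_eq_mul_inv]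
          have hsumZ : (Zw wt + Zw wf) * ((2:ℝ)^((n:ℝ) * Real.logb 2 (3/2)))⁻¹
              ≤ (2:ℝ)^(wRad wt) + (2:ℝ)^(wRad wf) := by
            rw [add_mul, ← eA, ← eB]
            linarith
          have hl := Real.logb_le_logb_of_le (b := 2) (by norm_num) (by positivity) hsumZ
          rw [Real.logb_mul (by positivity) (by positivity), Real.logb_inv,
            Real.logb_rpow (by norm_num) (by norm_num)] at hl
          rw [hZsum]
          calc Real.logb 2 (Zw wt + Zw wf) - n * Real.logb 2 (3/2)
              ≤ Real.logb 2 ((2:ℝ)^(wRad wt) + (2:ℝ)^(wRad wf)) := by linarith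
            _ = lse (wRad wt) (wRad wf) := rfl
        push_cast
        linarith [hRw, hmono]
      · -- wf has empty support
        have hf0 : ∀ x, wf x = 0 := fun x => le_antisymm (not_lt.1 fun h => hf ⟨x, h⟩) (hw _)
        have hZf : Zw wf = 0 := Finset.sum_eq_zero fun x _ => hf0 x
        have hR := hdeg true wt (fun _ => rfl) ht
        have iht := ih wt (fun x => hw _) ht
        rw [hZsum, hZf, add_zero]
        push_cast
        linarith
    · -- wt has empty support
      have ht0 : ∀ x, wt x = 0 := fun x => le_antisymm (not_lt.1 fun h => ht ⟨x, h⟩) (hw _)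
      have hf : ∃ x, 0 < wf x := by
        obtain ⟨x, hx⟩ := hsupp
        have hc : Fin.cons (x 0) (Fin.tail x) = x := Fin.cons_self_tail x
        cases hxb : x 0 with
        | true =>
          exfalso
          apply ht
          refine ⟨Fin.tail x, ?_⟩
          show 0 < w (Fin.cons true (Fin.tail x))
          rw [hxb] at hc
          rw [hc]; exact hx
        | false =>
          refine ⟨Fin.tail x, ?_⟩
          show 0 < w (Fin.cons false (Fin.tail x))
          rw [hxb] at hc
          rw [hc]; exact hx
      have hZt : Zw wt = 0 := Finset.sum_eq_zero fun x _ => ht0 x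
      have hR := hdeg false wf (fun _ => rfl) hf
      have ihf := ih wf (fun x => hw _) hf
      rw [hZsum, hZt, zero_add]
      push_cast
      linarith


theorem stmt8 (n : ℕ) (hn : 0 < n) (w : (Fin n → Bool) → ℝ)
    (hw : ∀ x, 0 ≤ w x) (hsupp : ∃ x, 0 < w x) :
    Real.logb 2 (Zw w) ≤ wRad w + n * Real.logb 2 (3 / 2) := by
  exact main_ind n w hw hsupp
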